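/- Let φ : ℕ → Option ℕ and let w : ℕ → ℂ be bounded. Then T_{w,φ} : ℓ¹ → ℓ¹ is bijective (equivalently, by the open mapping theorem, an isomorphism of ℓ¹) if and only if all of the following hold: φ is injective; φ(i) ≠ none for every i ∈ ℕ; for every j ∈ ℕ there exists i ∈ ℕ with φ(i) = some j; w(i) ≠ 0 for every i ∈ ℕ; and inf_i |w(i)| > 0. -/

import Mathlib

open scoped ENNReal

private lemma stmt13_single_apply (i : ℕ) (c : ℂ) (k : ℕ) :
    (lp.single 1 i c : lp (fun _ : ℕ => ℂ) 1) k = if k = i then c else 0 := by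
  by_cases h : k = i
  · subst h; simp [lp.single_apply_self]
  · rw [lp.single_apply_ne (E := fun _ : ℕ => ℂ) 1 i c h, if_neg h]

private lemma stmt13_norm_single (i : ℕ) (c : ℂ) :
    ‖(lp.single 1 i c : lp (fun _ : ℕ => ℂ) 1)‖ = ‖c‖ := by
  have := lp.norm_single (p := 1) (E := fun _ : ℕ => ℂ) (by norm_num) i c
  simpa using this

/-- If every term of the subtype sum vanishes, the coordinate is zero. -/
private lemma stmt13_tsum_zero {j : ℕ} (φ : ℕ → Option ℕ) (w : ℕ → ℂ) (a : ℕ → ℂ)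
    (h : ∀ x : {i : ℕ // φ i = some j}, w x.1 * a x.1 = 0) :
    ∑' i : {i : ℕ // φ i = some j}, w i.1 * a i.1 = 0 := by
  rw [tsum_congr h]; exact tsum_zero

set_option maxHeartbeats 1000000 in
/-- Let `T` be the weighted shift-type operator on `ℓ¹` determined by `φ : ℕ → Option ℕ` and a
bounded weight `w` (i.e. `(T a)(j) = Σ_{i : φ(i) = some j} w(i)·a(i)`). Then `T` is bijective
(equivalently, an isomorphism of `ℓ¹`) iff `φ` is injective, `φ(i) ≠ none` for every `i`,
every `j` is attained as `φ(i) = some j`, `w` never vanishes, and `inf_i |w(i)| > 0`. -/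
theorem stmt13 (φ : ℕ → Option ℕ) (w : ℕ → ℂ) (hw : ∃ C : ℝ, ∀ i, ‖w i‖ ≤ C)
    (T : lp (fun _ : ℕ => ℂ) 1 →L[ℂ] lp (fun _ : ℕ => ℂ) 1)
    (hT : ∀ (a : lp (fun _ : ℕ => ℂ) 1) (j : ℕ),
      T a j = ∑' i : {i : ℕ // φ i = some j}, w i * a i) :
    Function.Bijective T ↔
      (Function.Injective φ ∧ (∀ i : ℕ, φ i ≠ none) ∧ (∀ j : ℕ, ∃ i : ℕ, φ i = some j) ∧
        (∀ i : ℕ, w i ≠ 0) ∧ 0 < ⨅ i : ℕ, ‖w i‖) := by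
  -- how T acts on basis vectors
  have hTsingle_none : ∀ i : ℕ, φ i = none → ∀ c : ℂ, T (lp.single 1 i c) = 0 := by
    intro i hi c
    apply lp.ext
    funext k
    rw [hT]
    have : ∀ x : {i' : ℕ // φ i' = some k},
        w x.1 * (lp.single 1 i c : lp (fun _ : ℕ => ℂ) 1) x.1 = 0 := by
      rintro ⟨i', hi'⟩
      have : i' ≠ i := fun h => by rw [h, hi] at hi'; exact nomatch hi'
      simp [stmt13_single_apply, this]
    rw [stmt13_tsum_zero φ w _ this]
    rfl
  have hTsingle_some : ∀ i j : ℕ, φ i = some j → ∀ c : ℂ,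
      T (lp.single 1 i c) = lp.single 1 j (w i * c) := by
    intro i j hij c
    apply lp.ext
    funext k
    rw [hT]
    by_cases hk : k = j
    · subst hk
      have key : ∑' x : {i' : ℕ // φ i' = some k},
          w x.1 * (lp.single 1 i c : lp (fun _ : ℕ => ℂ) 1) x.1
          = w i * (lp.single 1 i c : lp (fun _ : ℕ => ℂ) 1) i :=
        tsum_eq_single (⟨i, hij⟩ : {i' : ℕ // φ i' = some k}) (by
          rintro ⟨i', hi'⟩ hne
          have : i' ≠ i := by
            intro h; exact hne (Subtype.ext h)
          simp [stmt13_single_apply, this])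
      rw [key]
      simp [stmt13_single_apply]
    · have : ∀ x : {i' : ℕ // φ i' = some k},
          w x.1 * (lp.single 1 i c : lp (fun _ : ℕ => ℂ) 1) x.1 = 0 := by
        rintro ⟨i', hi'⟩
        have : i' ≠ i := by
          intro h; rw [h, hij] at hi'
          exact hk (Option.some_injective _ hi'.symm)
        simp [stmt13_single_apply, this]
      rw [stmt13_tsum_zero φ w _ this]
      simp [stmt13_single_apply, hk]
  have hsingle_ne : ∀ (i : ℕ) (c : ℂ), c ≠ 0 →
      (lp.single 1 i c : lp (fun _ : ℕ => ℂ) 1) ≠ 0 := by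
    intro i c hc h
    have := stmt13_norm_single i c
    rw [h] at this
    simp at this
    exact hc (by simpa using this.symm)
  constructor
  · -- forward direction
    intro hbij
    -- φ i ≠ none and w i ≠ 0
    have hkey : ∀ i : ℕ, φ i ≠ none ∧ w i ≠ 0 := by
      intro i
      by_contra hcon
      push_neg at hcon
      have hz : T (lp.single 1 i 1) = 0 := by
        rcases h : φ i with _ | j
        · exact hTsingle_none i h 1
        · have hwi : w i = 0 := hcon (fun hn => by rw [h] at hn; exact nomatch hn)
          rw [hTsingle_some i j h 1, hwi]
          apply lp.ext
          funext k
          simp [stmt13_single_apply]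
      have : (lp.single 1 i (1:ℂ) : lp (fun _ : ℕ => ℂ) 1) = 0 := by
        apply hbij.1
        rw [hz, map_zero]
      exact hsingle_ne i 1 one_ne_zero this
    have hnone : ∀ i : ℕ, φ i ≠ none := fun i => (hkey i).1
    have hwne : ∀ i : ℕ, w i ≠ 0 := fun i => (hkey i).2
    -- φ injective
    have hinj : Function.Injective φ := by
      intro i₁ i₂ h12
      by_contra hne
      rcases hj : φ i₁ with _ | j
      · exact hnone i₁ hj
      · have hj2 : φ i₂ = some j := by rw [← h12, hj]
        have e1 := hTsingle_some i₁ j hj (w i₂)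
        have e2 := hTsingle_some i₂ j hj2 (w i₁)
        set x : lp (fun _ : ℕ => ℂ) 1 := lp.single 1 i₁ (w i₂) - lp.single 1 i₂ (w i₁) with hx
        have hTx : T x = 0 := by
          rw [hx, map_sub, e1, e2, mul_comm]
          simp
        have hzero : x = 0 := by
          apply hbij.1
          rw [hTx, map_zero]
        have hcoordx : (x : ℕ → ℂ) i₁ = 0 := by
          rw [hzero]; rfl
        rw [hx, lp.coeFn_sub, Pi.sub_apply] at hcoordx
        rw [stmt13_single_apply, stmt13_single_apply, if_pos rfl, if_neg hne] at hcoordx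
        simp at hcoordx
        exact hwne i₂ hcoordx
    -- φ "surjective"
    have hsurj : ∀ j : ℕ, ∃ i : ℕ, φ i = some j := by
      intro j
      by_contra hcon
      push_neg at hcon
      obtain ⟨a, ha⟩ := hbij.2 (lp.single 1 j 1)
      have h0 : (T a) j = 0 := by
        rw [hT]
        apply stmt13_tsum_zero
        rintro ⟨i, hi⟩
        exact absurd hi (hcon i)
      rw [ha] at h0
      rw [stmt13_single_apply, if_pos rfl] at h0
      exact one_ne_zero h0
    -- infimum positive
    refine ⟨hinj, hnone, hsurj, hwne, ?_⟩
    set e := ContinuousLinearEquiv.ofBijective T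
      (LinearMap.ker_eq_bot.2 hbij.1)
      (LinearMap.range_eq_top.2 hbij.2) with he
    set C := ‖(e.symm : lp (fun _ : ℕ => ℂ) 1 →L[ℂ] lp (fun _ : ℕ => ℂ) 1)‖ with hC
    have hbound : ∀ i : ℕ, 1 ≤ C * ‖w i‖ := by
      intro i
      rcases hj : φ i with _ | j
      · exact absurd hj (hnone i)
      have h1 : ‖(lp.single 1 i (1:ℂ) : lp (fun _ : ℕ => ℂ) 1)‖ = 1 := by
        rw [stmt13_norm_single]; simp
      have h2 : e.symm (T (lp.single 1 i 1)) = lp.single 1 i 1 := by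
        have h3 : e (lp.single 1 i 1) = T (lp.single 1 i 1) :=
          congrFun (ContinuousLinearEquiv.coeFn_ofBijective T _ _) _
        rw [← h3, e.symm_apply_apply]
      calc (1 : ℝ) = ‖(lp.single 1 i (1:ℂ) : lp (fun _ : ℕ => ℂ) 1)‖ := h1.symm
        _ = ‖e.symm (T (lp.single 1 i 1))‖ := by rw [h2]
        _ ≤ C * ‖T (lp.single 1 i (1:ℂ))‖ :=
            (e.symm : lp (fun _ : ℕ => ℂ) 1 →L[ℂ] lp (fun _ : ℕ => ℂ) 1).le_opNorm _
        _ = C * ‖w i‖ := by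
            rw [hTsingle_some i j hj 1, stmt13_norm_single]
            simp
    have hCpos : 0 < C := by
      by_contra h
      push_neg at h
      have := hbound 0
      nlinarith [norm_nonneg (w 0), mul_nonpos_of_nonpos_of_nonneg h (norm_nonneg (w 0))]
    have hlb : ∀ i : ℕ, C⁻¹ ≤ ‖w i‖ := by
      intro i
      rw [inv_le_iff_one_le_mul₀ hCpos]
      linarith [hbound i, mul_comm C ‖w i‖]
    calc (0 : ℝ) < C⁻¹ := by positivity
      _ ≤ ⨅ i : ℕ, ‖w i‖ := le_ciInf hlb
  · -- backward direction
    rintro ⟨hinj, hnone, hsurj, hwne, hinf⟩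
    set c := ⨅ i : ℕ, ‖w i‖ with hc
    have hbdd : BddBelow (Set.range fun i : ℕ => ‖w i‖) :=
      ⟨0, by rintro x ⟨i, rfl⟩; exact norm_nonneg _⟩
    have hcle : ∀ i : ℕ, c ≤ ‖w i‖ := fun i => ciInf_le hbdd i
    -- the one-point formula
    choose σ hσ using hsurj
    have huniq : ∀ (j i : ℕ), φ i = some j → i = σ j := by
      intro j i hi
      exact hinj (hi.trans (hσ j).symm)
    have hcoord : ∀ (a : lp (fun _ : ℕ => ℂ) 1) (j : ℕ),
        (T a) j = w (σ j) * a (σ j) := by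
      intro a j
      rw [hT]
      exact tsum_eq_single (⟨σ j, hσ j⟩ : {i : ℕ // φ i = some j}) (by
        rintro ⟨i, hi⟩ hne
        exact absurd (Subtype.ext (huniq j i hi)) hne)
    constructor
    · -- injective
      intro a₁ a₂ hab
      have hT0 : T (a₁ - a₂) = 0 := by rw [map_sub, hab, sub_self]
      have hz : ∀ j : ℕ, (a₁ - a₂ : lp (fun _ : ℕ => ℂ) 1) (σ j) = 0 := by
        intro j
        have h0 : (T (a₁ - a₂)) j = 0 := by rw [hT0]; rfl
        rw [hcoord] at h0
        exact (mul_eq_zero.1 h0).resolve_left (hwne _)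
      have hall : ∀ i : ℕ, (a₁ - a₂ : lp (fun _ : ℕ => ℂ) 1) i = 0 := by
        intro i
        rcases hj : φ i with _ | j
        · exact absurd hj (hnone i)
        · rw [huniq j i hj]; exact hz j
      have : a₁ - a₂ = 0 := by
        apply lp.ext; funext i
        exact hall i
      exact sub_eq_zero.1 this
    · -- surjective
      intro b
      set ψ : ℕ → ℕ := fun i => (φ i).getD 0 with hψ
      have hψi : ∀ i : ℕ, φ i = some (ψ i) := by
        intro i
        rcases hj : φ i with _ | j
        · exact absurd hj (hnone i)
        · simp [hψ, hj]
      have hψinj : Function.Injective ψ := by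
        intro i₁ i₂ h
        apply hinj
        rw [hψi i₁, hψi i₂, h]
      have hψσ : ∀ j : ℕ, ψ (σ j) = j := by
        intro j
        have h := hψi (σ j)
        rw [hσ j] at h
        exact (Option.some_injective _ h).symm
      set f : ℕ → ℂ := fun i => (w i)⁻¹ * b (ψ i) with hf
      have hcpos : 0 < c := hinf
      have hmem : Memℓp f 1 := by
        apply memℓp_gen
        simp only [ENNReal.toReal_one, Real.rpow_one]
        have hb : Summable fun j : ℕ => ‖b j‖ := by
          have := (lp.memℓp b).summable (p := 1) (by norm_num)
          simpa using this
        have hbψ : Summable fun i : ℕ => ‖b (ψ i)‖ := hb.comp_injective hψinj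
        apply Summable.of_nonneg_of_le (fun i => norm_nonneg _) _ (hbψ.mul_left c⁻¹)
        intro i
        rw [hf]
        simp only [norm_mul, norm_inv]
        apply mul_le_mul_of_nonneg_right _ (norm_nonneg _)
        rw [inv_le_inv₀ (lt_of_lt_of_le hcpos (hcle i)) hcpos]
        exact hcle i
      refine ⟨⟨f, hmem⟩, ?_⟩
      apply lp.ext
      funext j
      rw [hcoord]
      show w (σ j) * f (σ j) = b j
      rw [hf]
      simp only []
      rw [hψσ j, ← mul_assoc, mul_inv_cancel₀ (hwne _), one_mul]
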